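/- Let a, b be integers with a·b = 2 and consider the rings R₁ = ℤ[x₁,x₂]/⟨x₁^{n+1}, x₂(a x₁ + x₂)⟩ and R₂ = ℤ[x₁,x₂]/⟨x₁ⁿ(x₁ + b x₂), x₂(a x₁ + x₂)⟩, generators in degree 2. If n is even, then R₁ and R₂ are isomorphic as graded rings. -/

import Mathlib

open MvPolynomial

/-- `R₁ = ℤ[x₁,x₂]/⟨x₁^{n+1}, x₂(a·x₁+x₂)⟩`, the cohomology ring of
`ℂP^{n+1}_a # conj(ℂP^{n+1}_a)`, generators in degree 2. -/
noncomputable abbrev R₁ (n : ℕ) (a : ℤ) : Type :=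
  MvPolynomial (Fin 2) ℤ ⧸
    Ideal.span ({(X 0 : MvPolynomial (Fin 2) ℤ) ^ (n + 1),
      X 1 * (C a * X 0 + X 1)} : Set (MvPolynomial (Fin 2) ℤ))

/-- `R₂ = ℤ[x₁,x₂]/⟨x₁ⁿ(x₁+b·x₂), x₂(a·x₁+x₂)⟩`, the cohomology ring of
`ℂP^{n+1}_a # ℂP^{n+1}_a`, generators in degree 2. -/
noncomputable abbrev R₂ (n : ℕ) (a b : ℤ) : Type :=
  MvPolynomial (Fin 2) ℤ ⧸
    Ideal.span ({(X 0 : MvPolynomial (Fin 2) ℤ) ^ n * (X 0 + C b * X 1),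
      X 1 * (C a * X 0 + X 1)} : Set (MvPolynomial (Fin 2) ℤ))

noncomputable def u₁ (n : ℕ) (a : ℤ) : R₁ n a := Ideal.Quotient.mk _ (X 0)
noncomputable def u₂ (n : ℕ) (a : ℤ) : R₁ n a := Ideal.Quotient.mk _ (X 1)
noncomputable def v₁ (n : ℕ) (a b : ℤ) : R₂ n a b := Ideal.Quotient.mk _ (X 0)
noncomputable def v₂ (n : ℕ) (a b : ℤ) : R₂ n a b := Ideal.Quotient.mk _ (X 1)

namespace Stmt11Aux

noncomputable abbrev P : Type := MvPolynomial (Fin 2) ℤ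

noncomputable def F (b : ℤ) : P →ₐ[ℤ] P := aeval ![X 0 + C b * X 1, - X 1]

lemma F_X0 (b : ℤ) : F b (X 0) = X 0 + C b * X 1 := by simp [F]
lemma F_X1 (b : ℤ) : F b (X 1) = - X 1 := by simp [F]
lemma F_C (b r : ℤ) : F b (C r) = C r := by simp [F]

lemma F_comp_F (b : ℤ) : (F b).comp (F b) = AlgHom.id ℤ P := by
  apply MvPolynomial.algHom_ext
  intro i
  fin_cases i <;> simp [F]

lemma hC (a b : ℤ) (hab : a * b = 2) : (C a : P) * C b = 2 := by
  rw [← C_mul, hab]; simp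

lemma Fg (a b : ℤ) (hab : a * b = 2) :
    F b (X 1 * (C a * X 0 + X 1)) = - (X 1 * (C a * X 0 + X 1)) := by
  have h2 := hC a b hab
  simp only [map_mul, map_add, F_X0, F_X1, F_C]
  linear_combination (-(X 1 * X 1) : P) * h2

lemma sq (a b : ℤ) (hab : a * b = 2) :
    ((X 0 : P) + C b * X 1) ^ 2 = X 0 ^ 2 + (C b)^2 * (X 1 * (C a * X 0 + X 1)) := by
  have h2 := hC a b hab
  linear_combination (-(C b * X 0 * X 1) : P) * h2

lemma pow_even (a b : ℤ) (hab : a * b = 2) (m : ℕ) :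
    ∃ q : P, ((X 0 : P) + C b * X 1) ^ (2*m) = X 0 ^ (2*m) + q * (X 1 * (C a * X 0 + X 1)) := by
  induction m with
  | zero => exact ⟨0, by simp⟩
  | succ k ih =>
    obtain ⟨q, hq⟩ := ih
    refine ⟨q * X 0 ^ 2 + (C b)^2 * X 0 ^ (2*k) + q * (C b)^2 * (X 1 * (C a * X 0 + X 1)), ?_⟩
    have h : 2 * (k+1) = 2*k + 2 := by ring
    rw [h, pow_add, pow_add, hq, sq a b hab]
    ring

noncomputable abbrev I₁ (n : ℕ) (a : ℤ) : Ideal P :=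
  Ideal.span {(X 0 : P) ^ (n + 1), X 1 * (C a * X 0 + X 1)}
noncomputable abbrev I₂ (n : ℕ) (a b : ℤ) : Ideal P :=
  Ideal.span {(X 0 : P) ^ n * (X 0 + C b * X 1), X 1 * (C a * X 0 + X 1)}

lemma pow_even' (a b : ℤ) (hab : a * b = 2) {n : ℕ} (hn : Even n) :
    ∃ q : P, ((X 0 : P) + C b * X 1) ^ n = X 0 ^ n + q * (X 1 * (C a * X 0 + X 1)) := by
  obtain ⟨m, rfl⟩ := hn
  have h : m + m = 2 * m := by ring
  rw [h]; exact pow_even a b hab m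

lemma mem1 (n : ℕ) (a b : ℤ) (hab : a * b = 2) (hn : Even n) :
    F b ((X 0 : P) ^ (n+1)) ∈ I₂ n a b := by
  obtain ⟨q, hq⟩ := pow_even' a b hab hn
  rw [map_pow, F_X0]
  rw [Ideal.mem_span_pair]
  refine ⟨1, q * (X 0 + C b * X 1), ?_⟩
  rw [pow_succ, hq]; ring

lemma mem2 (n : ℕ) (a b : ℤ) (hab : a * b = 2) :
    F b ((X 1 : P) * (C a * X 0 + X 1)) ∈ I₂ n a b := by
  rw [Fg a b hab]
  exact neg_mem (Ideal.subset_span (by simp))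

lemma mem3 (n : ℕ) (a b : ℤ) (hab : a * b = 2) (hn : Even n) :
    F b ((X 0 : P) ^ n * (X 0 + C b * X 1)) ∈ I₁ n a := by
  obtain ⟨q, hq⟩ := pow_even' a b hab hn
  rw [map_mul, map_pow, map_add, map_mul, F_X0, F_X1, F_C]
  rw [Ideal.mem_span_pair]
  refine ⟨1, q * X 0, ?_⟩
  rw [hq]; ring

lemma mem4 (n : ℕ) (a b : ℤ) (hab : a * b = 2) :
    F b ((X 1 : P) * (C a * X 0 + X 1)) ∈ I₁ n a := by
  rw [Fg a b hab]
  exact neg_mem (Ideal.subset_span (by simp))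

noncomputable def f₁ (n : ℕ) (a b : ℤ) (hab : a * b = 2) (hn : Even n) :
    (P ⧸ I₁ n a) →ₐ[ℤ] (P ⧸ I₂ n a b) :=
  Ideal.Quotient.liftₐ (I₁ n a) ((Ideal.Quotient.mkₐ ℤ (I₂ n a b)).comp (F b)) (by
    intro p hp
    have hle : I₁ n a ≤ (I₂ n a b).comap (F b).toRingHom := by
      rw [Ideal.span_le]
      rintro x hx
      simp only [Set.mem_insert_iff, Set.mem_singleton_iff] at hx
      rcases hx with rfl | rfl
      · exact mem1 n a b hab hn
      · exact mem2 n a b hab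
    have h : F b p ∈ I₂ n a b := hle hp
    rw [AlgHom.comp_apply, Ideal.Quotient.mkₐ_eq_mk, Ideal.Quotient.eq_zero_iff_mem]
    exact h)

noncomputable def f₂ (n : ℕ) (a b : ℤ) (hab : a * b = 2) (hn : Even n) :
    (P ⧸ I₂ n a b) →ₐ[ℤ] (P ⧸ I₁ n a) :=
  Ideal.Quotient.liftₐ (I₂ n a b) ((Ideal.Quotient.mkₐ ℤ (I₁ n a)).comp (F b)) (by
    intro p hp
    have hle : I₂ n a b ≤ (I₁ n a).comap (F b).toRingHom := by
      rw [Ideal.span_le]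
      rintro x hx
      simp only [Set.mem_insert_iff, Set.mem_singleton_iff] at hx
      rcases hx with rfl | rfl
      · exact mem3 n a b hab hn
      · exact mem4 n a b hab
    have h : F b p ∈ I₁ n a := hle hp
    rw [AlgHom.comp_apply, Ideal.Quotient.mkₐ_eq_mk, Ideal.Quotient.eq_zero_iff_mem]
    exact h)

lemma hFF (b : ℤ) (p : P) : F b (F b p) = p := AlgHom.congr_fun (F_comp_F b) p

noncomputable def E (n : ℕ) (a b : ℤ) (hab : a * b = 2) (hn : Even n) :
    (P ⧸ I₁ n a) ≃ₐ[ℤ] (P ⧸ I₂ n a b) :=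
  AlgEquiv.ofAlgHom (f₁ n a b hab hn) (f₂ n a b hab hn)
    (by
      apply Ideal.Quotient.algHom_ext
      apply MvPolynomial.algHom_ext
      intro i
      simp [f₁, f₂, hFF]
      exact congrArg (Ideal.Quotient.mk _) (hFF b (X i)))
    (by
      apply Ideal.Quotient.algHom_ext
      apply MvPolynomial.algHom_ext
      intro i
      simp [f₁, f₂, hFF]
      exact congrArg (Ideal.Quotient.mk _) (hFF b (X i)))

lemma E_apply (n : ℕ) (a b : ℤ) (hab : a * b = 2) (hn : Even n) (p : P) :
    E n a b hab hn (Ideal.Quotient.mk _ p) = Ideal.Quotient.mk _ (F b p) := by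
  simp [E, f₁]
  rfl

end Stmt11Aux

/-- Let `a·b = 2` and `n` be even.  Then
`R₁ = ℤ[x₁,x₂]/⟨x₁^{n+1}, x₂(a·x₁+x₂)⟩` and `R₂ = ℤ[x₁,x₂]/⟨x₁ⁿ(x₁+b·x₂), x₂(a·x₁+x₂)⟩`
are isomorphic as graded rings: there is a ring isomorphism carrying the degree-2 part
`ℤx₁ ⊕ ℤx₂` of `R₁` into the degree-2 part of `R₂`. -/
theorem stmt11 (n : ℕ) (a b : ℤ) (hab : a * b = 2) (hn : Even n) :
    ∃ φ : R₁ n a ≃+* R₂ n a b,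
      φ (u₁ n a) ∈ Submodule.span ℤ ({v₁ n a b, v₂ n a b} : Set (R₂ n a b)) ∧
      φ (u₂ n a) ∈ Submodule.span ℤ ({v₁ n a b, v₂ n a b} : Set (R₂ n a b)) := by
  refine ⟨(Stmt11Aux.E n a b hab hn).toRingEquiv, ?_, ?_⟩
  · refine Submodule.mem_span_pair.mpr ⟨1, b, ?_⟩
    show (1:ℤ) • v₁ n a b + b • v₂ n a b
        = Stmt11Aux.E n a b hab hn (Ideal.Quotient.mk _ (X 0))
    rw [Stmt11Aux.E_apply, Stmt11Aux.F_X0]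
    have hcb : (Ideal.Quotient.mk (Stmt11Aux.I₂ n a b)) (C b)
        = ((b : ℤ) : Stmt11Aux.P ⧸ Stmt11Aux.I₂ n a b) :=
      (congrArg _ (eq_intCast (C : ℤ →+* Stmt11Aux.P) b)).trans (map_intCast _ b)
    rw [map_add, map_mul, hcb, one_smul]
    rw [v₁, v₂, zsmul_eq_mul]
  · refine Submodule.mem_span_pair.mpr ⟨0, -1, ?_⟩
    show (0:ℤ) • v₁ n a b + (-1:ℤ) • v₂ n a b
        = Stmt11Aux.E n a b hab hn (Ideal.Quotient.mk _ (X 1))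
    rw [Stmt11Aux.E_apply, Stmt11Aux.F_X1]
    rw [zero_smul, zero_add, v₂, map_neg, neg_smul, one_smul]
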